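/- Among all trees on N vertices (N ≥ 2) with unit edge weights, the path P_N has the strictly largest Wiener index: for every tree T on N vertices with T not a path, W(T) < W(P_N). -/

import Mathlib

/-- The Wiener index of a finite graph: the sum of pairwise distances
(each unordered pair counted once). -/
noncomputable def wiener {V : Type*} [Fintype V] (G : SimpleGraph V) : ℕ :=
  (∑ i : V, ∑ j : V, G.dist i j) / 2



open Finset SimpleGraph

/-- recursive value of double-sum Wiener of path -/
def pw : ℕ → ℕ
  | 0 => 0
  | (n+1) => pw n + n * (n+1)

lemma pw_even : ∀ n, 2 ∣ pw n
  | 0 => ⟨0, rfl⟩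
  | (n+1) => by
    have := pw_even n
    have h2 : 2 ∣ n * (n+1) := Nat.even_mul_succ_self n |>.two_dvd
    exact Nat.dvd_add this h2

lemma pw_ge (n : ℕ) (h : 2 ≤ n) : 2 ≤ pw n := by
  induction n with
  | zero => omega
  | succ m ih =>
    rcases Nat.lt_or_ge m 2 with hm | hm
    · interval_cases m
      · omega
      · simp [pw]
    · have := ih hm; simp only [pw]; omega

lemma gauss (n : ℕ) : 2 * ∑ k ∈ range (n+1), k = n * (n+1) := by
  have h := Finset.sum_range_id_mul_two (n+1)
  simp only [Nat.add_sub_cancel] at h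
  rw [mul_comm, h, mul_comm]

lemma pw_succ (n : ℕ) : pw (n+1) = pw n + 2 * ∑ k ∈ range (n+1), k := by
  rw [gauss]; rfl

/-- counting-sum identity -/
lemma sum_eq_sum_card_filter {α : Type*} [Fintype α] [DecidableEq α] (f : α → ℕ) (M : ℕ)
    (hf : ∀ a, f a ≤ M) :
    ∑ a, f a = ∑ k ∈ range M, (univ.filter (fun a => k < f a)).card := by
  classical
  have h1 : ∀ a, f a = ∑ k ∈ range M, (if k < f a then 1 else 0) := by
    intro a
    rw [Finset.sum_ite, Finset.sum_const_zero, add_zero, Finset.sum_const, smul_eq_mul, mul_one]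
    have : (range M).filter (fun k => k < f a) = range (f a) := by
      ext k; simp only [mem_filter, mem_range]
      constructor
      · rintro ⟨_, h⟩; exact h
      · intro h; exact ⟨lt_of_lt_of_le h (hf a), h⟩
    simp [this]
  calc ∑ a, f a = ∑ a, ∑ k ∈ range M, (if k < f a then 1 else 0) := by
        exact Finset.sum_congr rfl (fun a _ => h1 a)
    _ = ∑ k ∈ range M, ∑ a, (if k < f a then 1 else 0) := Finset.sum_comm
    _ = ∑ k ∈ range M, (univ.filter (fun a => k < f a)).card := by
        refine Finset.sum_congr rfl (fun k _ => ?_)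
        rw [Finset.card_filter]

lemma sum_reflect_eq (m : ℕ) : ∑ k ∈ range m, (m - k) = ∑ k ∈ range (m+1), k := by
  have := Finset.sum_range_reflect (fun i => i + 1) m
  have h2 : ∀ k ∈ range m, (m - 1 - k + 1) = m - k := by
    intro k hk; rw [mem_range] at hk; omega
  rw [Finset.sum_congr rfl h2] at this
  rw [this, Finset.sum_range_succ']
  simp

namespace SimpleGraph
variable {V : Type*} {G : SimpleGraph V}

lemma Walk.length_drop' {u v : V} (p : G.Walk u v) (n : ℕ) :
    (p.drop n).length = p.length - n := by
  induction p generalizing n with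
  | nil => cases n <;> simp [Walk.drop]
  | cons h q ih =>
    cases n with
    | zero => simp [Walk.drop]
    | succ n => simp [Walk.drop, ih]

lemma dist_getVert_le {u v : V} (p : G.Walk u v) (i : ℕ) :
    G.dist u (p.getVert i) ≤ i := by
  rcases le_or_gt i p.length with hi | hi
  · have hv : p.reverse.getVert (p.length - i) = p.getVert i := by
      rw [Walk.getVert_reverse]
      congr 1
      omega
    have q : G.Walk u (p.getVert i) :=
      ((p.reverse.drop (p.length - i)).reverse).copy rfl hv
    calc G.dist u (p.getVert i)
        ≤ (((p.reverse.drop (p.length - i)).reverse).copy rfl hv).length := dist_le _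
      _ ≤ i := by
          rw [Walk.length_copy, Walk.length_reverse, Walk.length_drop', Walk.length_reverse]
          omega
  · rw [p.getVert_of_length_le (le_of_lt hi)]
    exact le_trans (dist_le p) (le_of_lt hi)

lemma dist_getVert_eq {u v : V} (p : G.Walk u v) (hp : p.length = G.dist u v)
    {i : ℕ} (hi : i ≤ p.length) :
    G.dist u (p.getVert i) = i := by
  refine le_antisymm (dist_getVert_le p i) ?_
  by_contra hlt
  push_neg at hlt
  -- dist u v ≤ dist u (getVert i) + (length - i) < i + (length - i) = length
  classical
  have hmem : p.getVert i ∈ p.support :=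
    Walk.mem_support_iff_exists_getVert.mpr ⟨i, rfl, hi⟩
  have hr : G.Reachable u (p.getVert i) := ⟨p.takeUntil _ hmem⟩
  obtain ⟨w1, hw1⟩ := hr.exists_walk_length_eq_dist
  have := dist_le (w1.append (p.drop i))
  rw [Walk.length_append, hw1, Walk.length_drop'] at this
  omega

lemma dist_le_add_one_of_adj {u x y : V} (hr : G.Reachable u x) (h : G.Adj x y) :
    G.dist u y ≤ G.dist u x + 1 := by
  obtain ⟨w, hw⟩ := hr.exists_walk_length_eq_dist
  have := dist_le (w.concat h)
  rwa [Walk.length_concat, hw] at this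

lemma dist_ne_of_adj_tree {T : SimpleGraph V} (hT : T.IsTree) (u : V) {x y : V}
    (h : T.Adj x y) : T.dist u x ≠ T.dist u y := by
  classical
  intro heq
  obtain ⟨p, hp, hpl⟩ := (hT.isConnected u x).exists_path_of_dist
  obtain ⟨q, hq, hql⟩ := (hT.isConnected u y).exists_path_of_dist
  by_cases hy : y ∈ p.support
  · -- then dist u y < dist u x
    have h1 : T.dist u y ≤ (p.takeUntil y hy).length := dist_le _
    have h2 : (p.takeUntil y hy).length + (p.dropUntil y hy).length = p.length := by
      have := congrArg Walk.length (p.take_spec hy)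
      rwa [Walk.length_append] at this
    have h3 : (p.dropUntil y hy).length ≠ 0 := by
      intro h0
      have : ¬ (p.dropUntil y hy).Nil → False := by
        intro hn
        exact (Walk.not_nil_iff_lt_length.mp hn).ne' h0
      have hnil : (p.dropUntil y hy).Nil := by
        by_contra hn; exact this hn
      have : y = x := Walk.Nil.eq hnil
      exact h.ne (this ▸ rfl)
    omega
  · -- two distinct paths from y to u
    have hpath1 : (p.reverse.cons h.symm).IsPath := by
      rw [Walk.cons_isPath_iff]
      exact ⟨hp.reverse, by rwa [Walk.support_reverse, List.mem_reverse]⟩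
    have hpath2 : q.reverse.IsPath := hq.reverse
    have := (hT.existsUnique_path y u).unique hpath1 hpath2
    have hlen := congrArg Walk.length this
    rw [Walk.length_cons, Walk.length_reverse, Walk.length_reverse, hpl, hql, heq] at hlen
    omega

lemma exists_leaf {T : SimpleGraph V} [Fintype V] (hT : T.IsTree) (h2 : 2 ≤ Fintype.card V) :
    ∃ v w, T.Adj v w ∧ ∀ x, T.Adj v x → x = w := by
  classical
  have hne : Nonempty V := Fintype.card_pos_iff.mp (by omega)
  obtain ⟨u⟩ := hne
  obtain ⟨v, -, hvmax⟩ := Finset.exists_max_image Finset.univ (fun x => T.dist u x)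
    ⟨u, Finset.mem_univ u⟩
  have hvmax : ∀ x, T.dist u x ≤ T.dist u v := fun x => hvmax x (Finset.mem_univ x)
  obtain ⟨z, hz⟩ := Fintype.exists_ne_of_one_lt_card (by omega) u
  have hdvpos : 0 < T.dist u v :=
    lt_of_lt_of_le ((hT.isConnected u z).pos_dist_of_ne (Ne.symm hz)) (hvmax z)
  have hvu : v ≠ u := by
    intro h; rw [h, dist_self] at hdvpos; omega
  -- every neighbor of v equals the penultimate vertex of a geodesic
  have key : ∀ a, T.Adj v a → ∀ b, T.Adj v b → a = b := by
    have step : ∀ a, T.Adj v a →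
        ∃ (pa : T.Walk u a), pa.IsPath ∧ pa.length = T.dist u v - 1 ∧ v ∉ pa.support := by
      intro a ha
      have hne : T.dist u a ≠ T.dist u v := dist_ne_of_adj_tree hT u ha.symm
      have hle : T.dist u a ≤ T.dist u v := hvmax a
      have hge : T.dist u v ≤ T.dist u a + 1 :=
        dist_le_add_one_of_adj (hT.isConnected u a) ha.symm
      have hda : T.dist u a = T.dist u v - 1 := by omega
      obtain ⟨pa, hpa, hpal⟩ := (hT.isConnected u a).exists_path_of_dist
      refine ⟨pa, hpa, by omega, ?_⟩
      intro hmem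
      have := dist_le (pa.takeUntil v hmem)
      have := Walk.length_takeUntil_le pa hmem
      omega
    intro a ha b hb
    obtain ⟨pa, hpa, hpal, hva⟩ := step a ha
    obtain ⟨pb, hpb, hpbl, hvb⟩ := step b hb
    have h1 : (pa.reverse.cons ha).IsPath := by
      rw [Walk.cons_isPath_iff]
      exact ⟨hpa.reverse, by rwa [Walk.support_reverse, List.mem_reverse]⟩
    have h2 : (pb.reverse.cons hb).IsPath := by
      rw [Walk.cons_isPath_iff]
      exact ⟨hpb.reverse, by rwa [Walk.support_reverse, List.mem_reverse]⟩
    have heqw := (hT.existsUnique_path v u).unique h1 h2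
    have := congrArg (fun q => Walk.getVert q 1) heqw
    simpa [Walk.getVert_cons_succ] using this
  -- v has at least one neighbor
  obtain ⟨p, hpl⟩ := (hT.isConnected v u).exists_walk_length_eq_dist
  have hpnil : ¬ p.Nil := by
    rw [Walk.not_nil_iff_lt_length, hpl, dist_comm]
    omega
  exact ⟨v, p.getVert 1, p.adj_snd hpnil, fun x hx => key x hx _ (p.adj_snd hpnil)⟩

lemma leaf_not_mem_support {T : SimpleGraph V} {v w0 : V}
    (hleaf : ∀ x, T.Adj v x → x = w0) {a b : V} (p : T.Walk a b) (hp : p.IsPath)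
    (ha : a ≠ v) (hb : b ≠ v) : v ∉ p.support := by
  classical
  intro hmem
  set q1 := p.takeUntil v hmem with hq1
  set q2 := p.dropUntil v hmem with hq2
  have hq1n : ¬ q1.Nil := by
    intro hn
    exact ha (Walk.Nil.eq hn)
  have hq2n : ¬ q2.Nil := by
    intro hn
    exact hb (Walk.Nil.eq hn).symm
  have hq1rn : ¬ q1.reverse.Nil := by
    rw [Walk.not_nil_iff_lt_length, Walk.length_reverse]
    exact Walk.not_nil_iff_lt_length.mp hq1n
  have hadj1 : T.Adj v (q1.reverse.getVert 1) := q1.reverse.adj_snd hq1rn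
  have hadj2 : T.Adj v (q2.getVert 1) := q2.adj_snd hq2n
  have he1 : q1.reverse.getVert 1 = w0 := hleaf _ hadj1
  have he2 : q2.getVert 1 = w0 := hleaf _ hadj2
  -- w0 appears in q1.support and in q2.support.tail, contradicting nodup of p.support
  have hm1 : w0 ∈ q1.support := by
    have : q1.reverse.getVert 1 ∈ q1.reverse.support :=
      Walk.mem_support_iff_exists_getVert.mpr ⟨1, rfl,
        Walk.not_nil_iff_lt_length.mp hq1rn⟩
    rw [Walk.support_reverse, List.mem_reverse] at this
    rwa [← he1]
  have hm2 : w0 ∈ q2.support.tail := by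
    rw [← he2, ← Walk.support_tail_of_not_nil q2 hq2n]
    exact Walk.start_mem_support _
  have hnodup := hp.support_nodup
  rw [← p.take_spec hmem, Walk.support_append, ← hq1, ← hq2] at hnodup
  exact (List.disjoint_of_nodup_append hnodup) hm1 hm2

section Comap
variable {T : SimpleGraph V} {P : V → Prop}

lemma walk_transfer : ∀ {a b : V} (p : T.Walk a b) (ha : P a) (hb : P b),
    (∀ x ∈ p.support, P x) →
    ∃ q : (T.comap (Subtype.val : {x // P x} → V)).Walk ⟨a, ha⟩ ⟨b, hb⟩,
      q.length = p.length := by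
  intro a b p
  induction p with
  | nil => exact fun ha hb _ => ⟨Walk.nil, rfl⟩
  | @cons a c b h p ih =>
    intro ha hb hs
    have hc : P c := hs c (by simp [Walk.support_cons])
    obtain ⟨q, hq⟩ := ih hc hb (fun x hx => hs x (by simp [Walk.support_cons, hx]))
    exact ⟨Walk.cons (by exact h) q, by show q.length + 1 = _; rw [hq]; rfl⟩

/-- distances are preserved when deleting a leaf -/
lemma dist_comap_leaf [Fintype V] (hT : T.IsTree) {v w0 : V}
    (hleaf : ∀ x, T.Adj v x → x = w0)
    {a b : V} (ha : a ≠ v) (hb : b ≠ v) :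
    (T.comap (Subtype.val : {x // x ≠ v} → V)).dist ⟨a, ha⟩ ⟨b, hb⟩ = T.dist a b := by
  classical
  obtain ⟨p, hp, hpl⟩ := (hT.isConnected a b).exists_path_of_dist
  have hvp : v ∉ p.support := leaf_not_mem_support hleaf p hp ha hb
  obtain ⟨q, hq⟩ := walk_transfer (P := fun x => x ≠ v) p ha hb (fun x hx => fun hxv => hvp (hxv ▸ hx))
  refine le_antisymm (by rw [← hpl, ← hq]; exact dist_le q) ?_
  rcases Nat.eq_zero_or_pos ((T.comap (Subtype.val : {x // x ≠ v} → V)).dist ⟨a, ha⟩ ⟨b, hb⟩)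
    with h0 | hpos
  · have : (⟨a, ha⟩ : {x // x ≠ v}) = ⟨b, hb⟩ ∨ _ := dist_eq_zero_iff_eq_or_not_reachable.mp h0
    rcases this with h | h
    · have : a = b := congrArg Subtype.val h
      subst this
      simp [dist_self] at h0 ⊢
    · exact absurd ⟨q⟩ h
  · obtain ⟨r, hr⟩ := exists_walk_of_dist_ne_zero (Nat.pos_iff_ne_zero.mp hpos)
    have := dist_le (r.map (Embedding.comap (Function.Embedding.subtype _) T).toHom)
    exact le_trans this (le_of_eq (hr ▸ Walk.length_map _ _))

lemma tree_comap_leaf [Fintype V] (hT : T.IsTree) (h2 : 2 ≤ Fintype.card V) {v w0 : V}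
    (hleaf : ∀ x, T.Adj v x → x = w0) :
    (T.comap (Subtype.val : {x // x ≠ v} → V)).IsTree := by
  classical
  constructor
  · rw [connected_iff]
    constructor
    · rintro ⟨a, ha⟩ ⟨b, hb⟩
      obtain ⟨p, hp, hpl⟩ := (hT.isConnected a b).exists_path_of_dist
      have hvp : v ∉ p.support := leaf_not_mem_support hleaf p hp ha hb
      obtain ⟨q, -⟩ := walk_transfer (P := fun x => x ≠ v) p ha hb (fun x hx => fun hxv => hvp (hxv ▸ hx))
      exact ⟨q⟩
    · obtain ⟨z, hz⟩ := Fintype.exists_ne_of_one_lt_card (by omega) v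
      exact ⟨⟨z, hz⟩⟩
  · intro x c hc
    have := hc.map (f := (Embedding.comap (Function.Embedding.subtype _) T).toHom)
      (Function.Embedding.subtype _).injective
    exact hT.IsAcyclic _ this

end Comap

lemma sum_split [Fintype V] [DecidableEq V] (T : SimpleGraph V) (v : V) :
    ∑ i : V, ∑ j : V, T.dist i j =
      (∑ i : {x // x ≠ v}, ∑ j : {x // x ≠ v}, T.dist i.val j.val)
        + 2 * ∑ u : V, T.dist v u := by
  set e := Finset.univ.erase v with he
  have hmem : ∀ x : V, x ∈ e ↔ x ≠ v := by simp [he]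
  have hsub : ∀ (g : V → ℕ), ∑ x : {x // x ≠ v}, g x.val = ∑ x ∈ e, g x := by
    intro g
    exact (Finset.sum_subtype e hmem g).symm
  have hA : (∑ i : {x // x ≠ v}, ∑ j : {x // x ≠ v}, T.dist i.val j.val)
      = ∑ i ∈ e, ∑ j ∈ e, T.dist i j := by
    rw [hsub (fun i => ∑ j : {x // x ≠ v}, T.dist i j.val)]
    exact Finset.sum_congr rfl (fun i _ => hsub (fun j => T.dist i j))
  have hB : ∑ u : V, T.dist v u = ∑ j ∈ e, T.dist v j := by
    rw [← Finset.sum_erase_add Finset.univ _ (Finset.mem_univ v), dist_self, add_zero]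
  have hsplit : ∀ (g : V → ℕ), ∑ i : V, g i = ∑ i ∈ e, g i + g v := by
    intro g
    rw [Finset.sum_erase_add Finset.univ _ (Finset.mem_univ v)]
  rw [hA, hB]
  rw [hsplit (fun i => ∑ j : V, T.dist i j)]
  have hrow : ∀ i, ∑ j : V, T.dist i j = ∑ j ∈ e, T.dist i j + T.dist i v := by
    intro i
    rw [Finset.sum_erase_add Finset.univ _ (Finset.mem_univ v)]
  rw [Finset.sum_congr rfl (fun i (_ : i ∈ e) => hrow i), hrow v, dist_self, add_zero,
    Finset.sum_add_distrib]
  have hcol : ∑ i ∈ e, T.dist i v = ∑ i ∈ e, T.dist v i :=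
    Finset.sum_congr rfl (fun i _ => dist_comm)
  rw [hcol]
  ring

section Bound
variable [Fintype V] [DecidableEq V] {G : SimpleGraph V}

omit [DecidableEq V] in
lemma dist_le_card (hconn : G.Connected) (v u : V) : G.dist v u ≤ Fintype.card V - 1 := by
  obtain ⟨p, hp, hpl⟩ := (hconn v u).exists_path_of_dist
  have := hp.length_lt
  omega

omit [DecidableEq V] in
lemma card_level_le (hconn : G.Connected) (v : V) (k : ℕ) :
    (Finset.univ.filter (fun u => k < G.dist v u)).card ≤ Fintype.card V - 1 - k := by
  rcases Finset.eq_empty_or_nonempty (Finset.univ.filter (fun u => k < G.dist v u)) with h | h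
  · simp [h]
  · obtain ⟨u, hu⟩ := h
    rw [Finset.mem_filter] at hu
    have hk : k < G.dist v u := hu.2
    obtain ⟨p, hp, hpl⟩ := (hconn v u).exists_path_of_dist
    have himg : ∀ i ∈ Finset.range (k+1),
        p.getVert i ∈ Finset.univ.filter (fun u => ¬ k < G.dist v u) := by
      intro i hi
      rw [Finset.mem_range] at hi
      rw [Finset.mem_filter]
      refine ⟨Finset.mem_univ _, ?_⟩
      rw [dist_getVert_eq p hpl (by omega)]
      omega
    have hinj : Set.InjOn (fun i => p.getVert i) (Finset.range (k+1)) := by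
      intro i hi j hj hij
      rw [Finset.coe_range, Set.mem_Iio] at hi hj
      have h1 := dist_getVert_eq p hpl (i := i) (by omega)
      have h2 := dist_getVert_eq p hpl (i := j) (by omega)
      dsimp only at hij
      rw [hij] at h1
      omega
    have hcard := Finset.card_le_card_of_injOn _ himg hinj
    rw [Finset.card_range] at hcard
    have := Finset.card_filter_add_card_filter_not
      (s := Finset.univ) (p := fun u => k < G.dist v u)
    rw [Finset.card_univ] at this
    omega

lemma sum_dist_le (hconn : G.Connected) (v : V) :
    ∑ u : V, G.dist v u ≤ ∑ k ∈ range (Fintype.card V), k := by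
  have hN : 1 ≤ Fintype.card V := Fintype.card_pos_iff.mpr hconn.nonempty
  rw [sum_eq_sum_card_filter _ (Fintype.card V - 1) (dist_le_card hconn v)]
  calc ∑ k ∈ range (Fintype.card V - 1), (Finset.univ.filter (fun u => k < G.dist v u)).card
      ≤ ∑ k ∈ range (Fintype.card V - 1), (Fintype.card V - 1 - k) :=
        Finset.sum_le_sum (fun k _ => card_level_le hconn v k)
    _ = ∑ k ∈ range (Fintype.card V - 1 + 1), k := sum_reflect_eq _
    _ = ∑ k ∈ range (Fintype.card V), k := by
        rw [Nat.sub_add_cancel hN]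

end Bound

lemma iso_of_sum_eq [Fintype V] {T : SimpleGraph V} (hT : T.IsTree) {N : ℕ} (hN : 2 ≤ N)
    (hcard : Fintype.card V = N) (v : V)
    (heq : ∑ u : V, T.dist v u = ∑ k ∈ range N, k) :
    Nonempty (T ≃g pathGraph N) := by
  classical
  have hconn := hT.isConnected
  -- there is a vertex at distance N - 1
  have hex : ∃ u : V, T.dist v u = N - 1 := by
    by_contra hno
    push_neg at hno
    have hc0 : (Finset.univ.filter (fun u => (N - 2 : ℕ) < T.dist v u)).card = 0 := by
      rw [Finset.card_eq_zero, Finset.filter_eq_empty_iff]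
      intro u _
      have h1 := dist_le_card hconn v u
      rw [hcard] at h1
      have := hno u
      omega
    have hlt : ∑ k ∈ range (N-1), (Finset.univ.filter (fun u => k < T.dist v u)).card
        < ∑ k ∈ range (N-1), (N - 1 - k) := by
      refine Finset.sum_lt_sum (fun k _ => by
        have := card_level_le hconn v k; rwa [hcard] at this) ⟨N - 2, ?_, ?_⟩
      · rw [Finset.mem_range]; omega
      · rw [hc0]; omega
    rw [← sum_eq_sum_card_filter _ (N-1)
      (fun u => by have := dist_le_card hconn v u; omega), heq] at hlt
    have hr : ∑ k ∈ range (N-1), (N - 1 - k) = ∑ k ∈ range N, k := by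
      have := sum_reflect_eq (N-1)
      rwa [Nat.sub_add_cancel (by omega : 1 ≤ N)] at this
    omega
  obtain ⟨ustar, hustar⟩ := hex
  obtain ⟨p, hp, hpl⟩ := (hconn v ustar).exists_path_of_dist
  rw [hustar] at hpl
  have hdist : ∀ i : Fin N, T.dist v (p.getVert i) = i := by
    intro i
    exact dist_getVert_eq p (by rw [hpl, hustar]) (by rw [hpl]; omega)
  have hinj : Function.Injective (fun i : Fin N => p.getVert i) := by
    intro i j hij
    dsimp only at hij
    have h1 := hdist i
    rw [hij, hdist j] at h1
    exact Fin.ext (by exact_mod_cast h1.symm)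
  have hbij : Function.Bijective (fun i : Fin N => p.getVert i) :=
    (Fintype.bijective_iff_injective_and_card _).mpr ⟨hinj, by simp [hcard]⟩
  let e := Equiv.ofBijective _ hbij
  have hmapiff : ∀ a b : Fin N, T.Adj (e a) (e b) ↔ (pathGraph N).Adj a b := by
    intro a b
    constructor
    · intro hadj
      have hne := dist_ne_of_adj_tree hT v hadj
      have h1 : T.dist v (e a) ≤ T.dist v (e b) + 1 :=
        dist_le_add_one_of_adj (hconn v (e b)) hadj.symm
      have h2 : T.dist v (e b) ≤ T.dist v (e a) + 1 :=
        dist_le_add_one_of_adj (hconn v (e a)) hadj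
      have ha := hdist a
      have hb := hdist b
      have hea : T.dist v (e a) = a := ha
      have heb : T.dist v (e b) = b := hb
      rw [hea, heb] at hne h1 h2
      rw [pathGraph_adj]
      omega
    · intro hadj
      rw [pathGraph_adj] at hadj
      rcases hadj with h | h
      · have hlt : (a : ℕ) < p.length := by rw [hpl]; omega
        have := p.adj_getVert_succ hlt
        have hb : (b : ℕ) = (a : ℕ) + 1 := h.symm
        have : T.Adj (p.getVert a) (p.getVert b) := by rwa [hb]
        exact this
      · have hlt : (b : ℕ) < p.length := by rw [hpl]; omega
        have := p.adj_getVert_succ hlt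
        have ha : (a : ℕ) = (b : ℕ) + 1 := h.symm
        have : T.Adj (p.getVert b) (p.getVert a) := by rwa [ha]
        exact this.symm
  exact ⟨(({ toEquiv := e, map_rel_iff' := fun {a b} => hmapiff a b } :
    pathGraph N ≃g T)).symm⟩

section PathDist

lemma pathGraph_dist_le {n : ℕ} (d : ℕ) : ∀ (i j : Fin (n+1)), (j:ℕ) = i + d →
    (pathGraph (n+1)).dist i j ≤ d := by
  induction d with
  | zero =>
    intro i j h
    have : i = j := Fin.ext (by omega)
    rw [this, dist_self]
  | succ d ih =>
    intro i j h
    have hi1 : (i : ℕ) + 1 < n + 1 := by omega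
    set mid : Fin (n+1) := ⟨i + 1, hi1⟩ with hmid
    have hadj : (pathGraph (n+1)).Adj i mid := by
      rw [pathGraph_adj]
      left
      rfl
    have h1 : (pathGraph (n+1)).dist i mid = 1 := dist_eq_one_iff_adj.mpr hadj
    have h2 : (pathGraph (n+1)).dist mid j ≤ d := ih mid j (by simp [hmid]; omega)
    calc (pathGraph (n+1)).dist i j
        ≤ (pathGraph (n+1)).dist i mid + (pathGraph (n+1)).dist mid j :=
          (pathGraph_connected n).dist_triangle
      _ ≤ 1 + d := by omega
      _ = d + 1 := by omega

lemma pathGraph_walk_ge {n : ℕ} : ∀ {i j : Fin n} (p : (pathGraph n).Walk i j),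
    ((i:ℤ) - (j:ℤ)).natAbs ≤ p.length := by
  intro i j p
  induction p with
  | nil => simp
  | @cons i x j h q ih =>
    rw [pathGraph_adj] at h
    rw [Walk.length_cons]
    have h1 : ((i:ℤ) - (x:ℤ)).natAbs = 1 := by omega
    omega

lemma pathGraph_dist_eq {n : ℕ} (i j : Fin (n+1)) :
    (pathGraph (n+1)).dist i j = ((i:ℤ) - (j:ℤ)).natAbs := by
  refine le_antisymm ?_ ?_
  · rcases le_total (i:ℕ) (j:ℕ) with h | h
    · have := pathGraph_dist_le ((j:ℕ) - i) i j (by omega)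
      calc (pathGraph (n+1)).dist i j ≤ (j:ℕ) - i := this
        _ ≤ ((i:ℤ) - (j:ℤ)).natAbs := by omega
    · have := pathGraph_dist_le ((i:ℕ) - j) j i (by omega)
      rw [dist_comm] at this
      calc (pathGraph (n+1)).dist i j ≤ (i:ℕ) - j := this
        _ ≤ ((i:ℤ) - (j:ℤ)).natAbs := by omega
  · obtain ⟨p, hpl⟩ := ((pathGraph_connected n) i j).exists_walk_length_eq_dist
    have := pathGraph_walk_ge p
    omega

lemma sum_natAbs (n : ℕ) :
    ∑ i ∈ range (n+1), ∑ j ∈ range (n+1), ((i:ℤ) - (j:ℤ)).natAbs = pw (n+1) := by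
  induction n with
  | zero => simp [pw]
  | succ n ih =>
    have hrow : ∀ i ∈ range (n+1),
        ∑ j ∈ range (n+2), ((i:ℤ) - (j:ℤ)).natAbs
          = (∑ j ∈ range (n+1), ((i:ℤ) - (j:ℤ)).natAbs) + ((n:ℕ)+1 - i) := by
      intro i hi
      rw [Finset.mem_range] at hi
      rw [Finset.sum_range_succ]
      congr 1
      push_cast
      omega
    rw [Finset.sum_range_succ, Finset.sum_congr rfl hrow, Finset.sum_add_distrib, ih]
    have hlast : ∑ j ∈ range (n+2), (((n:ℤ)+1) - (j:ℤ)).natAbs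
        = ∑ j ∈ range (n+1), ((n:ℕ)+1 - j) := by
      rw [Finset.sum_range_succ]
      have h0 : (((n:ℤ)+1) - ((n:ℕ)+1 : ℕ)).natAbs = 0 := by push_cast; omega
      rw [h0, add_zero]
      refine Finset.sum_congr rfl (fun j hj => ?_)
      rw [Finset.mem_range] at hj
      push_cast
      omega
    have hcast : ∀ j ∈ range (n+2), (((n+1:ℕ):ℤ) - (j:ℤ)).natAbs
        = (((n:ℤ)+1) - (j:ℤ)).natAbs := by
      intro j _
      push_cast
      ring_nf
    rw [Finset.sum_congr rfl hcast, hlast]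
    have hrefl : ∑ j ∈ range (n+1), ((n:ℕ)+1 - j) = ∑ k ∈ range (n+2), k :=
      sum_reflect_eq (n+1)
    rw [hrefl]
    have hg := gauss (n+1)
    have h22 : n+1+1 = n+2 := rfl
    rw [h22] at hg
    show _ = pw (n+1) + (n+1) * (n+2)
    omega

lemma S_pathGraph (N : ℕ) :
    ∑ i : Fin N, ∑ j : Fin N, (pathGraph N).dist i j = pw N := by
  cases N with
  | zero => simp [pw]
  | succ n =>
    have h1 : ∀ i j : Fin (n+1), (pathGraph (n+1)).dist i j
        = (fun (a b : ℕ) => ((a:ℤ) - (b:ℤ)).natAbs) i.val j.val := by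
      intro i j
      exact pathGraph_dist_eq i j
    calc ∑ i : Fin (n+1), ∑ j : Fin (n+1), (pathGraph (n+1)).dist i j
        = ∑ i : Fin (n+1), ∑ j : Fin (n+1),
            (fun (a b : ℕ) => ((a:ℤ) - (b:ℤ)).natAbs) i.val j.val :=
          Finset.sum_congr rfl (fun i _ => Finset.sum_congr rfl (fun j _ => h1 i j))
      _ = ∑ i ∈ range (n+1), ∑ j ∈ range (n+1), ((i:ℤ) - (j:ℤ)).natAbs := by
          rw [← Fin.sum_univ_eq_sum_range]
          refine Finset.sum_congr rfl (fun i _ => ?_)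
          rw [← Fin.sum_univ_eq_sum_range]
      _ = pw (n+1) := sum_natAbs n

end PathDist

/-- Main inequality, by induction on the number of vertices. -/
lemma main_le : ∀ (N : ℕ) (V : Type u) [Fintype V] (T : SimpleGraph V),
    T.IsTree → Fintype.card V = N →
    ∑ i : V, ∑ j : V, T.dist i j ≤ pw N := by
  intro N
  induction N with
  | zero =>
    intro V _ T hT hcard
    have : IsEmpty V := Fintype.card_eq_zero_iff.mp hcard
    simp [pw]
  | succ n ih =>
    intro V _ T hT hcard
    rcases Nat.lt_or_ge n 1 with hn | hn
    · -- n = 0 : single vertex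
      interval_cases n
      have hsub : Subsingleton V := by
        rw [← Fintype.card_le_one_iff_subsingleton]
        omega
      have : ∀ i j : V, T.dist i j = 0 := by
        intro i j
        have : i = j := Subsingleton.elim i j
        rw [this, dist_self]
      simp only [this]
      simp [pw]
    · -- n + 1 ≥ 2 vertices : remove a leaf
      classical
      obtain ⟨v, w0, hadj, hleaf⟩ := exists_leaf hT (by omega)
      set T' := T.comap (Subtype.val : {x // x ≠ v} → V) with hT'
      have htree' : T'.IsTree := tree_comap_leaf hT (by omega) hleaf
      have hcard' : Fintype.card {x // x ≠ v} = n := by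
        rw [Fintype.card_subtype_compl (p := fun x => x = v)]
        rw [Fintype.card_subtype_eq]
        omega
      have hS' := ih {x // x ≠ v} T' htree' hcard'
      have hsplit := sum_split T v
      have hdist' : (∑ i : {x // x ≠ v}, ∑ j : {x // x ≠ v}, T.dist i.val j.val)
          = ∑ i : {x // x ≠ v}, ∑ j : {x // x ≠ v}, T'.dist i j := by
        refine Finset.sum_congr rfl (fun i _ => Finset.sum_congr rfl (fun j _ => ?_))
        exact (dist_comap_leaf hT hleaf i.prop j.prop).symm
      have hsum := sum_dist_le hT.isConnected v
      rw [hcard] at hsum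
      rw [hsplit, hdist', pw_succ n]
      have : ∑ k ∈ range (n+1), k = ∑ k ∈ range (n+1), k := rfl
      omega

lemma strict_lt {V : Type u} [Fintype V] {N : ℕ} (hN : 2 ≤ N)
    (T : SimpleGraph V) (hcard : Fintype.card V = N) (hT : T.IsTree)
    (hnp : ¬ Nonempty (T ≃g SimpleGraph.pathGraph N)) :
    ∑ i : V, ∑ j : V, T.dist i j < pw N := by
  classical
  have hle := main_le N V T hT hcard
  rcases lt_or_eq_of_le hle with h | h
  · exact h
  · exfalso
    obtain ⟨n, rfl⟩ : ∃ n, N = n + 1 := ⟨N - 1, by omega⟩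
    obtain ⟨v, w0, hadj, hleaf⟩ := exists_leaf hT (by omega)
    set T' := T.comap (Subtype.val : {x // x ≠ v} → V) with hT'
    have htree' : T'.IsTree := tree_comap_leaf hT (by omega) hleaf
    have hcard' : Fintype.card {x // x ≠ v} = n := by
      rw [Fintype.card_subtype_compl (p := fun x => x = v), Fintype.card_subtype_eq]
      omega
    have hS' := main_le n {x // x ≠ v} T' htree' hcard'
    have hsplit := sum_split T v
    have hdist' : (∑ i : {x // x ≠ v}, ∑ j : {x // x ≠ v}, T.dist i.val j.val)
        = ∑ i : {x // x ≠ v}, ∑ j : {x // x ≠ v}, T'.dist i j := by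
      refine Finset.sum_congr rfl (fun i _ => Finset.sum_congr rfl (fun j _ => ?_))
      exact (dist_comap_leaf hT hleaf i.prop j.prop).symm
    have hsum := sum_dist_le hT.isConnected v
    rw [hcard] at hsum
    have hpw := pw_succ n
    have hveq : ∑ u : V, T.dist v u = ∑ k ∈ range (n+1), k := by omega
    exact hnp (iso_of_sum_eq hT hN hcard v hveq)

end SimpleGraph

theorem stmt10 {V : Type*} [Fintype V] {N : ℕ} (hN : 2 ≤ N)
    (T : SimpleGraph V) (hcard : Fintype.card V = N) (hT : T.IsTree)
    (hnp : ¬ Nonempty (T ≃g SimpleGraph.pathGraph N)) :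
    wiener T < wiener (SimpleGraph.pathGraph N) := by
  have hstrict := SimpleGraph.strict_lt hN T hcard hT hnp
  have hpath : ∑ i : Fin N, ∑ j : Fin N, (SimpleGraph.pathGraph N).dist i j = pw N :=
    SimpleGraph.S_pathGraph N
  obtain ⟨m, hm⟩ := pw_even N
  have hm2 : 1 ≤ m := by
    have := pw_ge N hN
    omega
  unfold wiener
  rw [hpath, hm]
  rw [Nat.mul_div_cancel_left m (by omega : 0 < 2)]
  rw [Nat.div_lt_iff_lt_mul (by omega : 0 < 2)]
  omega
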